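/- Let T be a chemical tree on n vertices with exactly b branching vertices, where n ≥ 14 and 1 ≤ b ≤ n/2 − 1. Then Lz(T) ≥ 9b(n−4) + 4(n−2b−2)(n−3) + (b+2)(n−2), and equality holds if and only if the degree sequence of T consists of the value 3 with multiplicity b, the value 2 with multiplicity n−2b−2, and the value 1 with multiplicity b+2. -/
import Mathlib


open scoped Classical

/-- The vertex-degree function index `H_f(G) = Σ_{u ∈ V(G)} f(d(u))`. -/
noncomputable def Hf {V : Type*} [Fintype V] (G : SimpleGraph V) (f : ℝ → ℝ) : ℝ :=
  ∑ v, f (G.degree v)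

/-- The degree sequence of a graph, as a multiset of vertex degrees. -/
noncomputable def degSeq {V : Type*} [Fintype V] (G : SimpleGraph V) : Multiset ℕ :=
  Finset.univ.val.map (fun v => G.degree v)

/-- The Lanzhou index `Lz(G) = Σ_{u ∈ V(G)} d(u)² · (n − 1 − d(u))`,
where `n` is the number of vertices of `G`. -/
noncomputable def Lz {V : Type*} [Fintype V] (G : SimpleGraph V) : ℝ :=
  ∑ v, (G.degree v : ℝ) ^ 2 * ((Fintype.card V : ℝ) - 1 - (G.degree v : ℝ))

lemma auxReal (n d : ℕ) (h1 : 1 ≤ d) (h4 : d ≤ 4) :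
    (d:ℝ)^2 * ((n:ℝ) - 1 - (d:ℝ)) =
      (8 - 2*(n:ℝ)) + (3*(n:ℝ)-10)*(d:ℝ) + (if 3 ≤ d then 2*(n:ℝ)-14 else 0)
        + (if d = 4 then 4*(n:ℝ)-34 else 0) := by
  interval_cases d <;> norm_num <;> ring

lemma aux1 (d : ℕ) (h1 : 1 ≤ d) (h4 : d ≤ 4) :
    1 = (if d=1 then 1 else 0) + (if d=2 then 1 else 0) + (if d=3 then 1 else 0)
      + (if d=4 then 1 else 0) := by interval_cases d <;> simp

lemma aux2 (d : ℕ) (h1 : 1 ≤ d) (h4 : d ≤ 4) :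
    d = (if d=1 then 1 else 0) + 2*(if d=2 then 1 else 0) + 3*(if d=3 then 1 else 0)
      + 4*(if d=4 then 1 else 0) := by interval_cases d <;> simp

lemma aux3 (d : ℕ) (h1 : 1 ≤ d) (h4 : d ≤ 4) :
    (if 3 ≤ d then 1 else 0) = (if d=3 then 1 else 0) + (if d=4 then 1 else 0) := by
  interval_cases d <;> simp

theorem stmt15 {V : Type*} [Fintype V] (T : SimpleGraph V) (hT : T.IsTree)
    (hchem : ∀ v : V, T.degree v ≤ 4)
    (n b : ℕ) (hn : n = Fintype.card V) (hn14 : 14 ≤ n)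
    (hb : b = (Finset.univ.filter (fun v => 3 ≤ T.degree v)).card)
    (hb1 : 1 ≤ b) (hbn : (b : ℝ) ≤ (n : ℝ) / 2 - 1) :
    9 * (b : ℝ) * ((n : ℝ) - 4) + 4 * ((n : ℝ) - 2 * (b : ℝ) - 2) * ((n : ℝ) - 3)
      + ((b : ℝ) + 2) * ((n : ℝ) - 2) ≤ Lz T ∧
    (Lz T = 9 * (b : ℝ) * ((n : ℝ) - 4) + 4 * ((n : ℝ) - 2 * (b : ℝ) - 2) * ((n : ℝ) - 3)
        + ((b : ℝ) + 2) * ((n : ℝ) - 2) ↔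
      degSeq T = Multiset.replicate b 3 + Multiset.replicate (n - 2 * b - 2) 2
        + Multiset.replicate (b + 2) 1) := by
  have hdeg1 : ∀ v, 1 ≤ T.degree v := by
    intro v
    obtain ⟨w, hw⟩ := Fintype.exists_ne_of_one_lt_card (by omega) v
    obtain ⟨p⟩ := hT.isConnected.preconnected v w
    have : 0 < T.degree v := by
      rw [SimpleGraph.degree_pos_iff_exists_adj]
      cases p with
      | nil => exact absurd rfl hw.symm
      | cons h q => exact ⟨_, h⟩
    omega
  have hsum : ∑ v, T.degree v = 2 * (n - 1) := by
    rw [SimpleGraph.sum_degrees_eq_twice_card_edges]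
    have := hT.card_edgeFinset
    rw [← hn] at this
    omega
  set c : ℕ → ℕ := fun k => (Finset.univ.filter (fun v => T.degree v = k)).card with hc
  have hcnt : ∀ k, (∑ v : V, if T.degree v = k then 1 else 0) = c k :=
    fun k => (Finset.card_filter _ _).symm
  have e0 : c 1 + c 2 + c 3 + c 4 = n := by
    have h := Finset.sum_congr rfl
      (fun v (_ : v ∈ Finset.univ) => aux1 (T.degree v) (hdeg1 v) (hchem v))
    rw [Finset.sum_add_distrib, Finset.sum_add_distrib, Finset.sum_add_distrib,
      hcnt 1, hcnt 2, hcnt 3, hcnt 4] at h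
    simp only [Finset.sum_const, smul_eq_mul, mul_one, Finset.card_univ] at h
    omega
  have e1 : c 1 + 2 * c 2 + 3 * c 3 + 4 * c 4 = 2 * (n - 1) := by
    have h := Finset.sum_congr rfl
      (fun v (_ : v ∈ Finset.univ) => aux2 (T.degree v) (hdeg1 v) (hchem v))
    rw [Finset.sum_add_distrib, Finset.sum_add_distrib, Finset.sum_add_distrib,
      ← Finset.mul_sum, ← Finset.mul_sum, ← Finset.mul_sum,
      hcnt 1, hcnt 2, hcnt 3, hcnt 4, hsum] at h
    omega
  have e2 : b = c 3 + c 4 := by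
    have h := Finset.sum_congr rfl
      (fun v (_ : v ∈ Finset.univ) => aux3 (T.degree v) (hdeg1 v) (hchem v))
    rw [Finset.sum_add_distrib, hcnt 3, hcnt 4] at h
    rw [hb, Finset.card_filter]
    exact h
  have hsumR : (∑ v, (T.degree v : ℝ)) = 2 * (n:ℝ) - 2 := by
    rw [← Nat.cast_sum, hsum]
    have : (2 : ℕ) * (n - 1) = 2 * n - 2 := by omega
    rw [this]
    push_cast [Nat.cast_sub (by omega : 2 ≤ 2 * n)]
    ring
  have hbR : ((Finset.univ.filter (fun v => 3 ≤ T.degree v)).card : ℝ) = (b : ℝ) := by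
    rw [hb]
  have hkey : Lz T = (9 * (b : ℝ) * ((n : ℝ) - 4) + 4 * ((n : ℝ) - 2*(b:ℝ) - 2) * ((n:ℝ) - 3)
      + ((b:ℝ) + 2) * ((n:ℝ) - 2)) + (4 * (n:ℝ) - 34) * (c 4 : ℝ) := by
    unfold Lz
    rw [← hn]
    rw [Finset.sum_congr rfl
      (fun v (_ : v ∈ Finset.univ) => auxReal n (T.degree v) (hdeg1 v) (hchem v))]
    rw [Finset.sum_add_distrib, Finset.sum_add_distrib, Finset.sum_add_distrib,
      ← Finset.sum_filter, ← Finset.sum_filter, ← Finset.mul_sum]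
    simp only [Finset.sum_const, nsmul_eq_mul, smul_eq_mul, Finset.card_univ]
    rw [hsumR, hbR]
    have : ((Finset.univ.filter (fun v => T.degree v = 4)).card : ℝ) = (c 4 : ℝ) := by rw [hc]
    rw [this, ← hn]
    ring
  have hn14R : (14:ℝ) ≤ (n:ℝ) := by exact_mod_cast hn14
  have hdc : ∀ k, (degSeq T).count k = c k := by
    intro k
    rw [degSeq, Multiset.count_map, hc, ← Finset.filter_val, ← Finset.card_def,
      Finset.filter_congr (fun x _ => (eq_comm : k = T.degree x ↔ _))]
  refine ⟨?_, ?_⟩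
  · have h4 : (0:ℝ) ≤ (4 * (n:ℝ) - 34) * (c 4 : ℝ) :=
      mul_nonneg (by linarith) (Nat.cast_nonneg _)
    linarith [hkey]
  · have hiff : Lz T = 9 * (b : ℝ) * ((n : ℝ) - 4)
        + 4 * ((n : ℝ) - 2 * (b : ℝ) - 2) * ((n : ℝ) - 3) + ((b : ℝ) + 2) * ((n : ℝ) - 2)
        ↔ c 4 = 0 := by
      rw [hkey]
      constructor
      · intro h
        have h0 : (4 * (n:ℝ) - 34) * (c 4 : ℝ) = 0 := by linarith
        have hpos : (0:ℝ) < 4 * (n:ℝ) - 34 := by linarith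
        have := (mul_eq_zero.mp h0).resolve_left (ne_of_gt hpos)
        exact_mod_cast this
      · intro h
        rw [h]
        norm_num
    rw [hiff]
    constructor
    · intro h4
      have hc3 : c 3 = b := by omega
      have hc1 : c 1 = b + 2 := by omega
      have hc2 : c 2 = n - 2 * b - 2 := by omega
      have hno4 : ∀ v, T.degree v ≠ 4 := by
        intro v hv
        have : v ∈ Finset.univ.filter (fun v => T.degree v = 4) := by
          simp [hv]
        rw [Finset.card_eq_zero.mp h4] at this
        exact absurd this (Finset.notMem_empty v)
      refine Multiset.ext.mpr (fun k => ?_)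
      rw [hdc k]
      simp only [Multiset.count_add, Multiset.count_replicate]
      by_cases h1 : k = 1
      · subst h1; simp [hc1]
      · by_cases h2 : k = 2
        · subst h2; simp [hc2]
        · by_cases h3 : k = 3
          · subst h3; simp [hc3]
          · have : c k = 0 := by
              rw [hc]
              refine Finset.card_eq_zero.mpr (Finset.filter_eq_empty_iff.mpr ?_)
              intro v _
              have := hdeg1 v; have := hchem v; have := hno4 v
              omega
            rw [this, if_neg (fun h => h3 h.symm), if_neg (fun h => h2 h.symm),
              if_neg (fun h => h1 h.symm)]
    · intro hds
      have h4 := hdc 4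
      rw [hds] at h4
      simp only [Multiset.count_add, Multiset.count_replicate] at h4
      norm_num at h4
      omega
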